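/- Let A be a coherent acceptance set (a convex cone which is a nonempty proper monotone subset) in an ordered topological vector space X and S a traded asset. Then: (i) ρ_{A,S} is finitely valued if and only if S_T ∈ Core(A); (ii) ρ_{A,S} is continuous on X if and only if it is continuous at 0 if and only if S_T ∈ Interior(A). -/

import Mathlib

open Filter Topology

variable {X : Type*} [AddCommGroup X] [Module ℝ X] [PartialOrder X]
  [CovariantClass X X (· + ·) (· ≤ ·)] [PosSMulMono ℝ X]
  [TopologicalSpace X] [IsTopologicalAddGroup X] [ContinuousSMul ℝ X]

/-- The risk measure `ρ_{A,S}(x) = inf {m : x + (m/S₀)·S_T ∈ A}`, valued in `EReal`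
(with `inf ∅ = ⊤` and unbounded-below giving `⊥`). -/
noncomputable def rho (A : Set X) (S0 : ℝ) (ST : X) (x : X) : EReal :=
  sInf ((fun r : ℝ => (r : EReal)) '' {r : ℝ | x + (r / S0) • ST ∈ A})

/-- A set is monotone if it contains, with any element, every larger element. -/
def MonotoneSet (A : Set X) : Prop := ∀ x ∈ A, ∀ y, x ≤ y → y ∈ A

/-- An acceptance set: nonempty, proper, and monotone. -/
def AcceptanceSet (A : Set X) : Prop := A.Nonempty ∧ A ≠ Set.univ ∧ MonotoneSet A

/-- The algebraic core (algebraic interior) of a set. -/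
def algCore (A : Set X) : Set X :=
  {x | ∀ y : X, ∃ ε > 0, ∀ l : ℝ, |l| < ε → x + l • y ∈ A}

set_option linter.unusedSectionVars false
set_option linter.unusedVariables false

private lemma ereal_coe_sInf {s : Set ℝ} (hne : s.Nonempty) (hbd : BddBelow s) :
    sInf ((fun r : ℝ => (r : EReal)) '' s) = ((sInf s : ℝ) : EReal) := by
  apply le_antisymm
  · apply le_of_forall_gt_imp_ge_of_dense
    intro c hc
    obtain ⟨q, hq1, hq2⟩ := EReal.lt_iff_exists_real_btwn.1 hc
    obtain ⟨r, hr, hrq⟩ := exists_lt_of_csInf_lt hne (EReal.coe_lt_coe_iff.1 hq1)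
    exact le_trans (sInf_le ⟨r, hr, rfl⟩) ((EReal.coe_lt_coe_iff.2 hrq).le.trans hq2.le)
  · exact le_sInf (by rintro b ⟨r, hr, rfl⟩; exact EReal.coe_le_coe_iff.2 (csInf_le hbd hr))

section Aux

variable {A : Set X} {S0 : ℝ} {ST : X}

def Mset (A : Set X) (S0 : ℝ) (ST : X) (x : X) : Set ℝ := {r : ℝ | x + (r / S0) • ST ∈ A}

lemma rho_def (x : X) : rho A S0 ST x = sInf ((fun r : ℝ => (r : EReal)) '' Mset A S0 ST x) := rfl

lemma zero_mem_A (hA : AcceptanceSet A) (hcone : ∀ c : ℝ, 0 ≤ c → ∀ a ∈ A, c • a ∈ A) :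
    (0 : X) ∈ A := by
  obtain ⟨a, ha⟩ := hA.1
  simpa using hcone 0 le_rfl a ha

lemma ST_mem_A (hA : AcceptanceSet A) (hcone : ∀ c : ℝ, 0 ≤ c → ∀ a ∈ A, c • a ∈ A)
    (hST : 0 ≤ ST) : ST ∈ A :=
  hA.2.2 0 (zero_mem_A hA hcone) ST hST

lemma upward (hA : AcceptanceSet A) (hS0 : 0 < S0) (hST : 0 ≤ ST) {x : X} {r r' : ℝ}
    (h : r ≤ r') (hr : r ∈ Mset A S0 ST x) : r' ∈ Mset A S0 ST x := by
  refine hA.2.2 _ hr _ ?_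
  have h1 : (0 : X) ≤ ((r' - r) / S0) • ST :=
    smul_nonneg (div_nonneg (by linarith) hS0.le) hST
  calc x + (r / S0) • ST ≤ x + (r / S0) • ST + ((r' - r) / S0) • ST :=
        le_add_of_nonneg_right h1
    _ = x + (r' / S0) • ST := by
        rw [add_assoc, ← add_smul]
        congr 2
        ring

lemma addA (hconv : Convex ℝ A) (hcone : ∀ c : ℝ, 0 ≤ c → ∀ a ∈ A, c • a ∈ A)
    {a b : X} (ha : a ∈ A) (hb : b ∈ A) : a + b ∈ A := by
  have h1 : (1/2 : ℝ) • a + (1/2 : ℝ) • b ∈ A :=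
    hconv ha hb (by norm_num) (by norm_num) (by norm_num)
  have h2 := hcone 2 (by norm_num) _ h1
  convert h2 using 1
  module

lemma univ_of_line (hconv : Convex ℝ A) (hcone : ∀ c : ℝ, 0 ≤ c → ∀ a ∈ A, c • a ∈ A)
    (hcore : ST ∈ algCore A) {x : X} (hall : ∀ c : ℝ, x + c • ST ∈ A) : ∀ z : X, z ∈ A := by
  intro z
  obtain ⟨ε, hε, h⟩ := hcore (z - x)
  have hl0 : 0 < ε/2 := by positivity
  have h1 : ST + (ε/2) • (z - x) ∈ A := h (ε/2) (by rw [abs_of_pos hl0]; linarith)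
  have h2 : (ε/2)⁻¹ • (ST + (ε/2) • (z - x)) ∈ A := hcone _ (by positivity) _ h1
  have h3 : x + (-(ε/2)⁻¹) • ST ∈ A := hall _
  have h4 := addA hconv hcone h2 h3
  convert h4 using 1
  match_scalars <;> (field_simp; try ring)

end Aux

section Aux2

variable {A : Set X} {S0 : ℝ} {ST : X}

lemma neg_smul_not_mem (hA : AcceptanceSet A) (hconv : Convex ℝ A)
    (hcone : ∀ c : ℝ, 0 ≤ c → ∀ a ∈ A, c • a ∈ A) (hST : 0 ≤ ST)
    (hcore : ST ∈ algCore A) {t : ℝ} (ht : t < 0) : t • ST ∉ A := by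
  intro hmem
  have hall : ∀ c : ℝ, (0 : X) + c • ST ∈ A := by
    intro c
    rw [zero_add]
    rcases le_or_gt 0 c with hc | hc
    · exact hcone _ hc _ (ST_mem_A hA hcone hST)
    · have hct : (0:ℝ) ≤ c / t := by
        rw [div_nonneg_iff]; right; exact ⟨hc.le, ht.le⟩
      have : c • ST = (c / t) • (t • ST) := by
        rw [smul_smul, div_mul_cancel₀ c ht.ne]
      rw [this]
      exact hcone _ hct _ hmem
  exact hA.2.1 (Set.eq_univ_iff_forall.2 (univ_of_line hconv hcone hcore hall))

lemma mset_nonempty_of_core (hcone : ∀ c : ℝ, 0 ≤ c → ∀ a ∈ A, c • a ∈ A)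
    (hS0 : 0 < S0) (hcore : ST ∈ algCore A) (x : X) : (Mset A S0 ST x).Nonempty := by
  obtain ⟨ε, hε, h⟩ := hcore x
  have hl0 : 0 < ε/2 := by positivity
  have h1 : ST + (ε/2) • x ∈ A := h (ε/2) (by rw [abs_of_pos hl0]; linarith)
  have h2 : (ε/2)⁻¹ • (ST + (ε/2) • x) ∈ A := hcone _ (by positivity) _ h1
  refine ⟨S0 * (ε/2)⁻¹, ?_⟩
  show x + (S0 * (ε/2)⁻¹ / S0) • ST ∈ A
  convert h2 using 1
  match_scalars <;> (field_simp; try ring)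

lemma mset_bddBelow_of_core (hA : AcceptanceSet A) (hconv : Convex ℝ A)
    (hcone : ∀ c : ℝ, 0 ≤ c → ∀ a ∈ A, c • a ∈ A)
    (hS0 : 0 < S0) (hST : 0 ≤ ST) (hcore : ST ∈ algCore A) (x : X) :
    BddBelow (Mset A S0 ST x) := by
  by_contra hbd
  have hall : ∀ c : ℝ, x + c • ST ∈ A := by
    intro c
    obtain ⟨r', hr', hlt⟩ := not_bddBelow_iff.1 hbd (c * S0)
    have : c * S0 ∈ Mset A S0 ST x := upward hA hS0 hST hlt.le hr'
    have heq : c * S0 / S0 = c := by field_simp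
    simpa [Mset, heq] using this
  exact hA.2.1 (Set.eq_univ_iff_forall.2 (univ_of_line hconv hcone hcore hall))

lemma rho_ne_top {x : X} (hne : (Mset A S0 ST x).Nonempty) : rho A S0 ST x ≠ ⊤ := by
  obtain ⟨r, hr⟩ := hne
  exact ne_top_of_le_ne_top (EReal.coe_ne_top r) (sInf_le ⟨r, hr, rfl⟩)

lemma rho_ne_bot {x : X} (hbd : BddBelow (Mset A S0 ST x)) : rho A S0 ST x ≠ ⊥ := by
  obtain ⟨b, hb⟩ := hbd
  refine ne_bot_of_le_ne_bot (EReal.coe_ne_bot b) ?_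
  exact le_sInf (by rintro e ⟨r, hr, rfl⟩; exact EReal.coe_le_coe_iff.2 (hb hr))

lemma mset_nonempty_of_ne_top {x : X} (h : rho A S0 ST x ≠ ⊤) : (Mset A S0 ST x).Nonempty := by
  by_contra hne
  rw [Set.not_nonempty_iff_eq_empty] at hne
  apply h
  rw [rho_def, hne, Set.image_empty, sInf_empty]

lemma core_of_ne_top (hA : AcceptanceSet A) (hconv : Convex ℝ A)
    (hcone : ∀ c : ℝ, 0 ≤ c → ∀ a ∈ A, c • a ∈ A)
    (hS0 : 0 < S0) (hST : 0 ≤ ST) (h : ∀ x : X, rho A S0 ST x ≠ ⊤) : ST ∈ algCore A := by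
  have helper : ∀ y : X, ∃ a : ℝ, 0 < a ∧ ST + a • y ∈ A := by
    intro y
    obtain ⟨r, hr⟩ := mset_nonempty_of_ne_top (h y)
    set c : ℝ := max (r / S0) 1 with hc
    have hc1 : (1:ℝ) ≤ c := le_max_right _ _
    have hc0 : 0 < c := lt_of_lt_of_le one_pos hc1
    have hrc : r ≤ c * S0 := by
      rw [← div_le_iff₀ hS0]
      exact le_max_left _ _
    have h1 : c * S0 ∈ Mset A S0 ST y := upward hA hS0 hST hrc hr
    have h2 : y + c • ST ∈ A := by
      have heq : c * S0 / S0 = c := by field_simp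
      simpa [Mset, heq] using h1
    refine ⟨c⁻¹, by positivity, ?_⟩
    have h3 := hcone c⁻¹ (by positivity) _ h2
    convert h3 using 1
    match_scalars <;> (field_simp; try ring)
  intro y
  obtain ⟨a, ha, hay⟩ := helper y
  obtain ⟨b, hb, hby⟩ := helper (-y)
  refine ⟨min a b, lt_min ha hb, ?_⟩
  intro l hl
  have hSTA : ST ∈ A := ST_mem_A hA hcone hST
  rcases le_or_gt 0 l with h0 | h0
  · have hla : l < a := lt_of_lt_of_le (by rwa [abs_of_nonneg h0] at hl) (min_le_left _ _)
    have ht0 : (0:ℝ) ≤ l / a := by positivity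
    have ht1 : (0:ℝ) ≤ 1 - l / a := by
      have : l / a ≤ 1 := by rw [div_le_one ha]; linarith
      linarith
    have hcc := hconv hay hSTA ht0 ht1 (by ring)
    convert hcc using 1
    match_scalars <;> (field_simp; try ring)
  · have hlb : -l < b := lt_of_lt_of_le (by rwa [abs_of_neg h0] at hl) (min_le_right _ _)
    have ht0 : (0:ℝ) ≤ -l / b := div_nonneg (by linarith) hb.le
    have ht1 : (0:ℝ) ≤ 1 - -l / b := by
      have : -l / b ≤ 1 := by rw [div_le_one hb]; linarith
      linarith
    have hcc := hconv hby hSTA ht0 ht1 (by ring)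
    convert hcc using 1
    match_scalars <;> (field_simp; try ring)

end Aux2

open Pointwise
section Aux3

variable {A : Set X} {S0 : ℝ} {ST : X}

/-- The real-valued version of the risk measure. -/
noncomputable def grho (A : Set X) (S0 : ℝ) (ST : X) (x : X) : ℝ := sInf (Mset A S0 ST x)

lemma interior_subset_core (hint : ST ∈ interior A) : ST ∈ algCore A := by
  intro y
  have hco : Continuous (fun l : ℝ => ST + l • y) :=
    continuous_const.add (continuous_id.smul continuous_const)
  have hop : IsOpen ((fun l : ℝ => ST + l • y) ⁻¹' interior A) :=
    isOpen_interior.preimage hco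
  have h0 : (0:ℝ) ∈ (fun l : ℝ => ST + l • y) ⁻¹' interior A := by
    simpa using hint
  obtain ⟨ε, hε, hball⟩ := Metric.isOpen_iff.1 hop 0 h0
  refine ⟨ε, hε, fun l hl => ?_⟩
  have : l ∈ Metric.ball (0:ℝ) ε := by
    simpa [Real.dist_eq] using hl
  exact interior_subset (hball this)

section GLemmas

variable (hA : AcceptanceSet A) (hconv : Convex ℝ A)
  (hcone : ∀ c : ℝ, 0 ≤ c → ∀ a ∈ A, c • a ∈ A)
  (hS0 : 0 < S0) (hST : 0 ≤ ST) (hcore : ST ∈ algCore A)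

include hA hconv hcone hS0 hST hcore

lemma grho_le {x : X} {r : ℝ} (hr : r ∈ Mset A S0 ST x) : grho A S0 ST x ≤ r :=
  csInf_le (mset_bddBelow_of_core hA hconv hcone hS0 hST hcore x) hr

lemma grho_subadd (x y : X) :
    grho A S0 ST (x + y) ≤ grho A S0 ST x + grho A S0 ST y := by
  have hbd := mset_bddBelow_of_core hA hconv hcone hS0 hST hcore
  have hne := mset_nonempty_of_core hcone hS0 hcore
  have key : ∀ a ∈ Mset A S0 ST x, ∀ b ∈ Mset A S0 ST y, grho A S0 ST (x+y) ≤ a + b := by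
    intro a ha b hb
    refine csInf_le (hbd _) ?_
    show (x + y) + ((a + b) / S0) • ST ∈ A
    have := addA hconv hcone ha hb
    convert this using 1
    match_scalars <;> (field_simp; try ring)
  have h1 : ∀ b ∈ Mset A S0 ST y, grho A S0 ST (x+y) - b ≤ grho A S0 ST x := by
    intro b hb
    exact le_csInf (hne x) (fun a ha => by linarith [key a ha b hb])
  have h2 : grho A S0 ST (x+y) - grho A S0 ST x ≤ grho A S0 ST y :=
    le_csInf (hne y) (fun b hb => by linarith [h1 b hb])
  linarith

lemma grho_zero : grho A S0 ST 0 = 0 := by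
  have hM : Mset A S0 ST 0 = Set.Ici 0 := by
    ext r
    simp only [Mset, Set.mem_setOf_eq, zero_add, Set.mem_Ici]
    constructor
    · intro hr
      by_contra h0
      push_neg at h0
      exact neg_smul_not_mem hA hconv hcone hST hcore
        (div_neg_of_neg_of_pos h0 hS0) hr
    · intro hr
      exact hcone _ (div_nonneg hr hS0.le) _ (ST_mem_A hA hcone hST)
  rw [grho, hM, csInf_Ici]

lemma rho_eq_grho (x : X) : rho A S0 ST x = ((grho A S0 ST x : ℝ) : EReal) := by
  rw [rho_def, ereal_coe_sInf (mset_nonempty_of_core hcone hS0 hcore x)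
    (mset_bddBelow_of_core hA hconv hcone hS0 hST hcore x)]
  rfl

end GLemmas

lemma grho_tendsto_zero (hA : AcceptanceSet A) (hconv : Convex ℝ A)
    (hcone : ∀ c : ℝ, 0 ≤ c → ∀ a ∈ A, c • a ∈ A)
    (hS0 : 0 < S0) (hST : 0 ≤ ST) (hint : ST ∈ interior A) :
    Tendsto (grho A S0 ST) (𝓝 0) (𝓝 0) := by
  have hcore := interior_subset_core hint
  rw [Metric.tendsto_nhds]
  intro ε hε
  set δ : ℝ := ε / (2 * S0) with hδdef
  have hδ : 0 < δ := by positivity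
  have hδS : δ * S0 = ε / 2 := by
    rw [hδdef]; field_simp
  set V : Set X := (fun v : X => ST + v) ⁻¹' interior A with hVdef
  have hVopen : IsOpen V := isOpen_interior.preimage (continuous_const.add continuous_id)
  have hV0 : (0:X) ∈ V := by simp [hVdef, hint]
  have hδV : IsOpen (δ • V) := hVopen.smul₀ hδ.ne'
  have h0δV : (0:X) ∈ δ • V := ⟨0, hV0, smul_zero δ⟩
  have hbound : ∀ h ∈ δ • V, grho A S0 ST h ≤ δ * S0 := by
    rintro _ ⟨v, hv, rfl⟩
    refine grho_le hA hconv hcone hS0 hST hcore ?_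
    show δ • v + (δ * S0 / S0) • ST ∈ A
    have h1 : ST + v ∈ A := interior_subset hv
    have h2 := hcone δ hδ.le _ h1
    convert h2 using 1
    match_scalars <;> (field_simp; try ring)
  have hN : (δ • V) ∩ ((fun h : X => -h) ⁻¹' (δ • V)) ∈ 𝓝 (0:X) := by
    refine Filter.inter_mem (hδV.mem_nhds h0δV) ?_
    refine (hδV.preimage continuous_neg).mem_nhds ?_
    simpa using h0δV
  filter_upwards [hN] with h hh
  obtain ⟨h1, h2⟩ := hh
  have hg1 : grho A S0 ST h ≤ δ * S0 := hbound h h1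
  have hg2 : grho A S0 ST (-h) ≤ δ * S0 := hbound (-h) h2
  have hg3 : (0:ℝ) ≤ grho A S0 ST h + grho A S0 ST (-h) := by
    have := grho_subadd hA hconv hcone hS0 hST hcore h (-h)
    rw [add_neg_cancel, grho_zero hA hconv hcone hS0 hST hcore] at this
    linarith
  rw [Real.dist_eq, sub_zero, abs_lt]
  constructor <;> linarith

lemma grho_continuous (hA : AcceptanceSet A) (hconv : Convex ℝ A)
    (hcone : ∀ c : ℝ, 0 ≤ c → ∀ a ∈ A, c • a ∈ A)
    (hS0 : 0 < S0) (hST : 0 ≤ ST) (hint : ST ∈ interior A) :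
    Continuous (grho A S0 ST) := by
  have hcore := interior_subset_core hint
  have ht0 := grho_tendsto_zero hA hconv hcone hS0 hST hint
  rw [continuous_iff_continuousAt]
  intro x
  have hneg : Tendsto (fun h : X => grho A S0 ST (-h)) (𝓝 0) (𝓝 0) :=
    ht0.comp ((continuous_neg.tendsto (0:X)).congr' (by simp) |>.mono_right (by rw [neg_zero]))
  have key : Tendsto (fun h => grho A S0 ST (x + h)) (𝓝 0) (𝓝 (grho A S0 ST x)) := by
    refine tendsto_of_tendsto_of_tendsto_of_le_of_le
      (f := fun h => grho A S0 ST (x + h))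
      (g := fun h : X => grho A S0 ST x - grho A S0 ST (-h))
      (h := fun h : X => grho A S0 ST x + grho A S0 ST h) ?_ ?_ ?_ ?_
    · simpa using tendsto_const_nhds.sub hneg
    · simpa using tendsto_const_nhds.add ht0
    · intro h
      have := grho_subadd hA hconv hcone hS0 hST hcore (x + h) (-h)
      rw [add_neg_cancel_right] at this
      simp only; linarith
    · intro h
      exact grho_subadd hA hconv hcone hS0 hST hcore x h
  unfold ContinuousAt
  rw [← map_add_left_nhds_zero x, tendsto_map'_iff]
  exact key

lemma rho_continuous_of_interior (hA : AcceptanceSet A) (hconv : Convex ℝ A)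
    (hcone : ∀ c : ℝ, 0 ≤ c → ∀ a ∈ A, c • a ∈ A)
    (hS0 : 0 < S0) (hST : 0 ≤ ST) (hint : ST ∈ interior A) :
    Continuous (rho A S0 ST) := by
  have hcore := interior_subset_core hint
  have : rho A S0 ST = fun x => ((grho A S0 ST x : ℝ) : EReal) :=
    funext (rho_eq_grho hA hconv hcone hS0 hST hcore)
  rw [this]
  exact continuous_coe_real_ereal.comp (grho_continuous hA hconv hcone hS0 hST hint)

lemma interior_of_continuousAt (hA : AcceptanceSet A)
    (hcone : ∀ c : ℝ, 0 ≤ c → ∀ a ∈ A, c • a ∈ A)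
    (hS0 : 0 < S0) (hST : 0 ≤ ST) (h : ContinuousAt (rho A S0 ST) 0) : ST ∈ interior A := by
  have h0mem : (0:ℝ) ∈ Mset A S0 ST 0 := by
    show (0:X) + ((0:ℝ) / S0) • ST ∈ A
    simpa using zero_mem_A hA hcone
  have h0 : rho A S0 ST 0 ≤ ((0:ℝ) : EReal) := sInf_le ⟨0, h0mem, rfl⟩
  have hlt : rho A S0 ST 0 < ((S0 : ℝ) : EReal) :=
    lt_of_le_of_lt h0 (EReal.coe_lt_coe_iff.2 hS0)
  have hev : (rho A S0 ST) ⁻¹' (Set.Iio ((S0:ℝ):EReal)) ∈ 𝓝 (0:X) :=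
    h (Iio_mem_nhds hlt)
  have himp : ∀ x : X, rho A S0 ST x < ((S0:ℝ):EReal) → x + ST ∈ A := by
    intro x hx
    obtain ⟨e, ⟨r, hr, rfl⟩, hlt'⟩ := sInf_lt_iff.1 hx
    have hrS : r ≤ S0 := (EReal.coe_lt_coe_iff.1 hlt').le
    have := upward hA hS0 hST hrS hr
    have heq : S0 / S0 = (1:ℝ) := div_self hS0.ne'
    simpa [Mset, heq] using this
  rw [mem_interior_iff_mem_nhds]
  have : 𝓝 ST = Filter.map (fun x : X => x + ST) (𝓝 0) :=
    (map_add_right_nhds_zero ST).symm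
  rw [this, Filter.mem_map]
  filter_upwards [hev] with x hx
  exact himp x hx

end Aux3

/-- for a coherent acceptance set (a monotone, nonempty, proper convex
cone): (i) ρ_{A,S} is finitely valued iff S_T ∈ Core(A); (ii) ρ_{A,S} is continuous
iff it is continuous at 0 iff S_T ∈ Interior(A). -/
theorem rho_coherent_finiteness_and_continuity (A : Set X) (S0 : ℝ) (ST : X)
    (hA : AcceptanceSet A) (hconv : Convex ℝ A)
    (hcone : ∀ c : ℝ, 0 ≤ c → ∀ a ∈ A, c • a ∈ A)
    (hS0 : 0 < S0) (hST : 0 ≤ ST) (hSTne : ST ≠ 0) :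
    ((∀ x : X, rho A S0 ST x ≠ ⊤ ∧ rho A S0 ST x ≠ ⊥) ↔ ST ∈ algCore A) ∧
    (Continuous (rho A S0 ST) ↔ ContinuousAt (rho A S0 ST) 0) ∧
    (ContinuousAt (rho A S0 ST) 0 ↔ ST ∈ interior A) :=
  ⟨⟨fun h => core_of_ne_top hA hconv hcone hS0 hST (fun x => (h x).1),
    fun hcore x => ⟨rho_ne_top (mset_nonempty_of_core hcone hS0 hcore x),
      rho_ne_bot (mset_bddBelow_of_core hA hconv hcone hS0 hST hcore x)⟩⟩,
    ⟨fun h => h.continuousAt, fun h =>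
      rho_continuous_of_interior hA hconv hcone hS0 hST
        (interior_of_continuousAt hA hcone hS0 hST h)⟩,
    ⟨interior_of_continuousAt hA hcone hS0 hST, fun h =>
      (rho_continuous_of_interior hA hconv hcone hS0 hST h).continuousAt⟩⟩
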